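/- Let μ : ℝ → ℝ be C¹ with |μ'(y)| ≤ C/(1+|y|^γ) for all y, for some C > 0 and γ > 1, and let φ : ℝ → ℝ be C² and bounded below. Assume that for every x the function v ↦ μ(½v² + φ(x)) is integrable over ℝ and that φ''(x) = 1 − ∫_ℝ μ(½v² + φ(x)) dv for all x. Then for every x the function v ↦ μ'(½v² + φ(x)) is integrable over ℝ, φ is three times differentiable, and φ'''(x) = −q(x) φ'(x) for all x, where q(x) := ∫_ℝ μ'(½v² + φ(x)) dv. -/

import Mathlib

open MeasureTheory

/-- **Differentiation under the integral for the BGK Poisson equation.** If `μ` is `C¹`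
with decaying derivative, `φ` is `C²` and bounded below, and `φ'' = 1 − ∫ μ(½v² + φ) dv`,
then `v ↦ μ'(½v² + φ(x))` is integrable, `φ` is three times differentiable, and
`φ''' = −qφ'` where `q(x) = ∫ μ'(½v² + φ(x)) dv`. -/
theorem bgk_potential_third_derivative
    (μ φ : ℝ → ℝ) (C γ : ℝ) (hC : 0 < C) (hγ : 1 < γ)
    (hμC1 : ContDiff ℝ 1 μ)
    (hdecay : ∀ y, |deriv μ y| ≤ C / (1 + |y| ^ γ))
    (hφC2 : ContDiff ℝ 2 φ)
    (hφbdd : BddBelow (Set.range φ))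
    (hμint : ∀ x, Integrable (fun v : ℝ => μ (v ^ 2 / 2 + φ x)))
    (hpoisson : ∀ x, deriv (deriv φ) x = 1 - ∫ v : ℝ, μ (v ^ 2 / 2 + φ x)) :
    (∀ x, Integrable (fun v : ℝ => deriv μ (v ^ 2 / 2 + φ x))) ∧
    Differentiable ℝ (deriv (deriv φ)) ∧
    (∀ x, deriv (deriv (deriv φ)) x
        = - (∫ v : ℝ, deriv μ (v ^ 2 / 2 + φ x)) * deriv φ x) := by
  obtain ⟨m, hm⟩ := hφbdd
  have hmφ : ∀ x, m ≤ φ x := fun x => hm ⟨x, rfl⟩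
  have hγ0 : (0:ℝ) ≤ γ := by linarith
  set bound : ℝ → ℝ := fun v => C / (1 + (max 0 (v ^ 2 / 2 + m)) ^ γ) with hbound_def
  have hden_pos : ∀ v : ℝ, (0:ℝ) < 1 + (max 0 (v ^ 2 / 2 + m)) ^ γ := by
    intro v
    have : (0:ℝ) ≤ (max 0 (v ^ 2 / 2 + m)) ^ γ := Real.rpow_nonneg (le_max_left _ _) _
    linarith
  have hbound_nonneg : ∀ v, 0 ≤ bound v := fun v =>
    div_nonneg hC.le (hden_pos v).le
  -- key pointwise bound
  have hkey : ∀ x v : ℝ, |deriv μ (v ^ 2 / 2 + φ x)| ≤ bound v := by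
    intro x v
    refine (hdecay _).trans ?_
    have h1 : max 0 (v ^ 2 / 2 + m) ≤ |v ^ 2 / 2 + φ x| := by
      refine max_le (abs_nonneg _) ?_
      calc v ^ 2 / 2 + m ≤ v ^ 2 / 2 + φ x := by linarith [hmφ x]
        _ ≤ |v ^ 2 / 2 + φ x| := le_abs_self _
    have h2 : (max 0 (v ^ 2 / 2 + m)) ^ γ ≤ |v ^ 2 / 2 + φ x| ^ γ :=
      Real.rpow_le_rpow (le_max_left _ _) h1 hγ0
    exact div_le_div_of_nonneg_left hC.le (hden_pos v) (by linarith)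
  -- continuity / measurability of bound
  have hbound_cont : Continuous bound := by
    refine continuous_const.div ?_ fun v => (hden_pos v).ne'
    refine continuous_const.add ?_
    exact (continuous_const.max (by continuity)).rpow_const
      (fun v => Or.inr hγ0)
  -- integrability of bound
  have hbound_int : Integrable bound := by
    set K : ℝ := max 4 (1 + (4 * |m| + 4)) with hK
    have hK4 : (4:ℝ) ≤ K := le_max_left _ _
    have hbd : ∀ v : ℝ, bound v ≤ C * K * (1 + v ^ 2)⁻¹ := by
      intro v
      have hv2 : (0:ℝ) ≤ v ^ 2 := sq_nonneg v
      have h1v : (0:ℝ) < 1 + v ^ 2 := by linarith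
      have hmain : (1 + v ^ 2) / K ≤ 1 + (max 0 (v ^ 2 / 2 + m)) ^ γ := by
        rcases le_or_gt (v ^ 2) (4 * |m| + 4) with h | h
        · have : (1 + v ^ 2) / K ≤ 1 := by
            rw [div_le_one (by linarith)]
            calc 1 + v ^ 2 ≤ 1 + (4 * |m| + 4) := by linarith
              _ ≤ K := le_max_right _ _
          have h0 : (0:ℝ) ≤ (max 0 (v ^ 2 / 2 + m)) ^ γ :=
            Real.rpow_nonneg (le_max_left _ _) _
          linarith
        · have hmabs : -|m| ≤ m := neg_abs_le m
          have hM1 : (1:ℝ) ≤ max 0 (v ^ 2 / 2 + m) := by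
            refine le_max_of_le_right ?_
            nlinarith [abs_nonneg m]
          have hMq : v ^ 2 / 4 ≤ max 0 (v ^ 2 / 2 + m) := by
            refine le_max_of_le_right ?_
            nlinarith [abs_nonneg m]
          have hMγ : max 0 (v ^ 2 / 2 + m) ≤ (max 0 (v ^ 2 / 2 + m)) ^ γ := by
            calc max 0 (v ^ 2 / 2 + m) = (max 0 (v ^ 2 / 2 + m)) ^ (1:ℝ) :=
                (Real.rpow_one _).symm
              _ ≤ _ := Real.rpow_le_rpow_of_exponent_le hM1 hγ.le
          have hdiv : (1 + v ^ 2) / K ≤ (1 + v ^ 2) / 4 := by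
            apply div_le_div_of_nonneg_left (by linarith) (by norm_num) hK4
          calc (1 + v ^ 2) / K ≤ (1 + v ^ 2) / 4 := hdiv
            _ ≤ 1 + v ^ 2 / 4 := by linarith
            _ ≤ 1 + (max 0 (v ^ 2 / 2 + m)) ^ γ := by linarith [hMq.trans hMγ]
      have hKpos : (0:ℝ) < K := by linarith
      rw [hbound_def]
      calc bound v ≤ C / ((1 + v ^ 2) / K) :=
            div_le_div_of_nonneg_left hC.le (by positivity) hmain
        _ = C * K * (1 + v ^ 2)⁻¹ := by
            rw [div_div_eq_mul_div, div_eq_mul_inv]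
    refine (integrable_inv_one_add_sq.const_mul (C * K)).mono'
      hbound_cont.aestronglyMeasurable ?_
    filter_upwards with v
    rw [Real.norm_eq_abs, abs_of_nonneg (hbound_nonneg v)]
    exact hbd v
  -- continuity facts
  have hμ' : Continuous (deriv μ) := hμC1.continuous_deriv le_rfl
  have hφdiff : Differentiable ℝ φ := hφC2.differentiable (by norm_num)
  have hφ'cont : Continuous (deriv φ) := hφC2.continuous_deriv (by norm_num)
  -- first conjunct: integrability
  have hint : ∀ x, Integrable (fun v : ℝ => deriv μ (v ^ 2 / 2 + φ x)) := by
    intro x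
    refine hbound_int.mono' ?_ ?_
    · exact (hμ'.comp (by continuity)).aestronglyMeasurable
    · filter_upwards with v
      rw [Real.norm_eq_abs]
      exact hkey x v
  refine ⟨hint, ?_⟩
  -- the key differentiation-under-the-integral step
  have key : ∀ x₀ : ℝ, HasDerivAt (deriv (deriv φ))
      (-(∫ v : ℝ, deriv μ (v ^ 2 / 2 + φ x₀)) * deriv φ x₀) x₀ := by
    intro x₀
    obtain ⟨K, hKb⟩ := (isCompact_Icc (a := x₀ - 1) (b := x₀ + 1)).exists_bound_of_continuousOn
      (hφ'cont.continuousOn (s := Set.Icc (x₀ - 1) (x₀ + 1)))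
    have hK0 : 0 ≤ K := le_trans (norm_nonneg _)
      (hKb x₀ (by constructor <;> linarith))
    have hball : ∀ x ∈ Metric.ball x₀ 1, |deriv φ x| ≤ K := by
      intro x hx
      rw [Metric.mem_ball, Real.dist_eq] at hx
      have h1 : x ∈ Set.Icc (x₀ - 1) (x₀ + 1) := by
        rcases abs_lt.mp hx with ⟨h1, h2⟩
        constructor <;> linarith
      simpa [Real.norm_eq_abs] using hKb x h1
    have hvc : ∀ x : ℝ, Continuous (fun v : ℝ => v ^ 2 / 2 + φ x) := fun x =>
      ((continuous_pow 2).div_const 2).add continuous_const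
    have hFmeas : ∀ x : ℝ, AEStronglyMeasurable (fun v : ℝ => μ (v ^ 2 / 2 + φ x))
        (volume : Measure ℝ) := fun x =>
      (hμC1.continuous.comp (hvc x)).aestronglyMeasurable
    have hF'meas : AEStronglyMeasurable
        (fun v : ℝ => deriv μ (v ^ 2 / 2 + φ x₀) * deriv φ x₀) (volume : Measure ℝ) :=
      ((hμ'.comp (hvc x₀)).mul continuous_const).aestronglyMeasurable
    have hdc := hasDerivAt_integral_of_dominated_loc_of_deriv_le
      (F := fun x v => μ (v ^ 2 / 2 + φ x))
      (F' := fun x v => deriv μ (v ^ 2 / 2 + φ x) * deriv φ x)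
      (x₀ := x₀) (bound := fun v => bound v * K)
      (μ := (volume : Measure ℝ)) (Metric.ball_mem_nhds x₀ one_pos)
      (Filter.Eventually.of_forall hFmeas)
      (hμint x₀)
      hF'meas
      (Filter.Eventually.of_forall fun v => ?_)
      (hbound_int.mul_const K)
      (Filter.Eventually.of_forall fun v => ?_)
    · obtain ⟨hF'int, hderiv⟩ := hdc
      have hq : (∫ v : ℝ, deriv μ (v ^ 2 / 2 + φ x₀) * deriv φ x₀)
          = (∫ v : ℝ, deriv μ (v ^ 2 / 2 + φ x₀)) * deriv φ x₀ :=
        integral_mul_const _ _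
      rw [hq] at hderiv
      have h3 : HasDerivAt (fun x => 1 - ∫ v : ℝ, μ (v ^ 2 / 2 + φ x))
          (-((∫ v : ℝ, deriv μ (v ^ 2 / 2 + φ x₀)) * deriv φ x₀)) x₀ :=
        hderiv.const_sub 1
      have heq : (fun x => 1 - ∫ v : ℝ, μ (v ^ 2 / 2 + φ x)) = deriv (deriv φ) :=
        funext fun x => (hpoisson x).symm
      rw [heq] at h3
      simpa [neg_mul] using h3
    · -- the bound
      intro x hx
      rw [Real.norm_eq_abs, abs_mul]
      exact mul_le_mul (hkey x v) (hball x hx) (abs_nonneg _) (hbound_nonneg v)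
    · -- differentiability in x
      intro x hx
      have h1 : HasDerivAt (fun x => v ^ 2 / 2 + φ x) (deriv φ x) x :=
        ((hφdiff x).hasDerivAt).const_add (v ^ 2 / 2)
      have h2 : HasDerivAt μ (deriv μ (v ^ 2 / 2 + φ x)) (v ^ 2 / 2 + φ x) :=
        ((hμC1.differentiable one_ne_zero) _).hasDerivAt
      exact h2.comp x h1
  constructor
  · exact fun x => (key x).differentiableAt
  · intro x
    exact (key x).deriv
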